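/- If G is a prime bipartite graph, then G*v \ v is prime for every vertex v of G. -/

import Mathlib

variable {V : Type*}

/-- A split of a simple graph. -/
def IsSplit (G : SimpleGraph V) (A B : Set V) : Prop :=
  A ∪ B = Set.univ ∧ Disjoint A B ∧ 2 ≤ A.ncard ∧ 2 ≤ B.ncard ∧
    ∃ A' B', A' ⊆ A ∧ B' ⊆ B ∧ ∀ x ∈ A, ∀ y ∈ B, (G.Adj x y ↔ (x ∈ A' ∧ y ∈ B'))

/-- A graph is prime if it has no split. -/
def IsPrime (G : SimpleGraph V) : Prop := ¬ ∃ A B : Set V, IsSplit G A B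

/-- Local complementation at a vertex. -/
def localComp (G : SimpleGraph V) (v : V) : SimpleGraph V where
  Adj x y := x ≠ y ∧ Xor' (G.Adj x y) (G.Adj v x ∧ G.Adj v y)
  symm := by
    constructor
    intro x y h
    refine ⟨h.1.symm, ?_⟩
    rw [SimpleGraph.adj_comm, and_comm]
    exact h.2
  loopless := by constructor; intro x h; exact h.1 rfl

/-- Pivoting an edge: G ∧ vw = G*v*w*v. -/
def pivot (G : SimpleGraph V) (v w : V) : SimpleGraph V :=
  localComp (localComp (localComp G v) w) v

/-- Vertex deletion. -/
def deleteVert (G : SimpleGraph V) (v : V) : SimpleGraph {x : V // x ≠ v} :=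
  G.induce {x | x ≠ v}

/-- Two vertices are twins if every other vertex is adjacent to one iff to the other. -/
def Twins (G : SimpleGraph V) (u w : V) : Prop :=
  ∀ x, x ≠ u → x ≠ w → (G.Adj x u ↔ G.Adj x w)

lemma aux_no_triangle {G : SimpleGraph V} (h : G.Colorable 2) {a b c : V}
    (h1 : G.Adj a b) (h2 : G.Adj b c) (h3 : G.Adj a c) : False := by
  obtain ⟨C⟩ := h
  have e1 : (C a).val ≠ (C b).val := fun h' => (C.valid h1) (Fin.ext h')
  have e2 : (C b).val ≠ (C c).val := fun h' => (C.valid h2) (Fin.ext h')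
  have e3 : (C a).val ≠ (C c).val := fun h' => (C.valid h3) (Fin.ext h')
  have := (C a).isLt; have := (C b).isLt; have := (C c).isLt
  omega

lemma aux_no_pentagon {G : SimpleGraph V} (h : G.Colorable 2) {x0 x1 x2 x3 x4 : V}
    (h01 : G.Adj x0 x1) (h12 : G.Adj x1 x2) (h23 : G.Adj x2 x3) (h34 : G.Adj x3 x4)
    (h40 : G.Adj x4 x0) : False := by
  obtain ⟨C⟩ := h
  have e1 : (C x0).val ≠ (C x1).val := fun h' => (C.valid h01) (Fin.ext h')
  have e2 : (C x1).val ≠ (C x2).val := fun h' => (C.valid h12) (Fin.ext h')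
  have e3 : (C x2).val ≠ (C x3).val := fun h' => (C.valid h23) (Fin.ext h')
  have e4 : (C x3).val ≠ (C x4).val := fun h' => (C.valid h34) (Fin.ext h')
  have e5 : (C x4).val ≠ (C x0).val := fun h' => (C.valid h40) (Fin.ext h')
  have := (C x0).isLt; have := (C x1).isLt; have := (C x2).isLt
  have := (C x3).isLt; have := (C x4).isLt
  omega

lemma aux_xor_cancel (p q : Prop) : Xor' (Xor' p q) q ↔ p := by unfold Xor' Xor; tauto

lemma aux_split_symm {G : SimpleGraph V} {A B : Set V} (h : IsSplit G A B) : IsSplit G B A := by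
  obtain ⟨hcov, hdisj, h2, h2', A', B', hA', hB', hadj⟩ := h
  refine ⟨by rw [Set.union_comm]; exact hcov, hdisj.symm, h2', h2, B', A', hB', hA',
    fun y hy x hx => ?_⟩
  rw [G.adj_comm, hadj x hx y hy]; tauto

/-- Build a split of `G` on `V` from data over the subtype `{x // x ≠ v}`,
putting `v` on the first side. -/
lemma aux_build_split [Finite V] (G : SimpleGraph V) (v : V)
    (P Q : Set {x : V // x ≠ v}) (hcov : P ∪ Q = Set.univ) (hdisj : Disjoint P Q)
    (h2P : 2 ≤ P.ncard) (h2Q : 2 ≤ Q.ncard) (A'' B'' : Set V)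
    (hA'' : A'' ⊆ Subtype.val '' P ∪ {v}) (hB'' : B'' ⊆ Subtype.val '' Q)
    (hadj : ∀ x ∈ Subtype.val '' P ∪ {v}, ∀ y ∈ Subtype.val '' Q,
      (G.Adj x y ↔ x ∈ A'' ∧ y ∈ B'')) :
    IsSplit G (Subtype.val '' P ∪ {v}) (Subtype.val '' Q) := by
  refine ⟨?_, ?_, ?_, ?_, A'', B'', hA'', hB'', hadj⟩
  · ext u
    simp only [Set.mem_union, Set.mem_image, Set.mem_singleton_iff, Set.mem_univ, iff_true]
    by_cases hu : u = v
    · exact Or.inl (Or.inr hu)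
    · have : (⟨u, hu⟩ : {x : V // x ≠ v}) ∈ P ∪ Q := hcov ▸ Set.mem_univ _
      rcases this with h | h
      · exact Or.inl (Or.inl ⟨⟨u, hu⟩, h, rfl⟩)
      · exact Or.inr ⟨⟨u, hu⟩, h, rfl⟩
  · refine Set.disjoint_union_left.mpr ⟨(Set.disjoint_image_iff Subtype.val_injective).mpr hdisj, ?_⟩
    rw [Set.disjoint_singleton_left]
    rintro ⟨⟨y, hy⟩, -, h⟩
    exact hy h
  · calc 2 ≤ P.ncard := h2P
      _ = (Subtype.val '' P).ncard := (Set.ncard_image_of_injective _ Subtype.val_injective).symm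
      _ ≤ _ := Set.ncard_le_ncard Set.subset_union_left (Set.toFinite _)
  · rw [Set.ncard_image_of_injective _ Subtype.val_injective]; exact h2Q

/-- If G is a prime bipartite graph, then G*v ∖ v is prime for every vertex v. -/
theorem prime_localComp_delete_of_bipartite {V : Type*} [Finite V] (G : SimpleGraph V)
    (hbip : G.Colorable 2) (hprime : IsPrime G) (v : V) :
    IsPrime (deleteVert (localComp G v) v) := by
  rintro ⟨A, B, hcov, hdisj, h2A, h2B, A', B', hA'sub, hB'sub, hadj⟩
  -- adjacency in H
  have hH : ∀ x y : {x : V // x ≠ v}, (deleteVert (localComp G v) v).Adj x y ↔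
      ((x : V) ≠ y ∧ Xor' (G.Adj x y) (G.Adj v x ∧ G.Adj v y)) := by
    intro x y
    simp [deleteVert, localComp, SimpleGraph.comap]
  -- N is independent
  have hindep : ∀ {a b : V}, G.Adj v a → G.Adj v b → ¬ G.Adj a b := by
    intro a b ha hb hab
    exact aux_no_triangle hbip ha hab hb
  -- G adjacency in terms of H adjacency, for distinct x y ≠ v
  have hGH : ∀ x y : {x : V // x ≠ v}, (x : V) ≠ y →
      (G.Adj x y ↔ Xor' ((deleteVert (localComp G v) v).Adj x y) (G.Adj v x ∧ G.Adj v y)) := by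
    intro x y hxy
    rw [hH x y, and_iff_right hxy, aux_xor_cancel]
  -- helper facts about images
  have hvne : ∀ (S : Set {x : V // x ≠ v}), v ∉ Subtype.val '' S := by
    rintro S ⟨⟨y, hy⟩, -, h⟩; exact hy h
  have himg : ∀ (S : Set {x : V // x ≠ v}) (a : {x : V // x ≠ v}),
      ((a : V) ∈ Subtype.val '' S ↔ a ∈ S) := by
    intro S a
    constructor
    · rintro ⟨a', h, he⟩; rwa [Subtype.val_injective he] at h
    · exact fun h => ⟨a, h, rfl⟩
  have hneAB : ∀ x ∈ A, ∀ y ∈ B, (x : V) ≠ (y : V) := by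
    intro x hx y hy h
    cases Subtype.val_injective h
    exact Set.disjoint_left.mp hdisj hx hy
  have key : ∀ a ∈ A, ∀ b ∈ B,
      (G.Adj ↑a ↑b ↔ Xor' (a ∈ A' ∧ b ∈ B') (G.Adj v ↑a ∧ G.Adj v ↑b)) := by
    intro a haA b hbB
    have h1 : (deleteVert (localComp G v) v).Adj a b ↔ (a ∈ A' ∧ b ∈ B') := hadj a haA b hbB
    rw [hGH a b (hneAB a haA b hbB), h1]
  by_cases hNB : ∃ b ∈ B, G.Adj v ↑b
  · by_cases hNA : ∃ a ∈ A, G.Adj v ↑a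
    · obtain ⟨a1, ha1A, ha1N⟩ := hNA
      obtain ⟨b1, hb1B, hb1N⟩ := hNB
      have hNA' : ∀ a ∈ A, G.Adj v ↑a → a ∈ A' := by
        intro a haA haN
        have h2 : (deleteVert (localComp G v) v).Adj a b1 := by
          rw [hH]
          exact ⟨hneAB a haA b1 hb1B, Or.inr ⟨⟨haN, hb1N⟩, hindep haN hb1N⟩⟩
        exact ((hadj a haA b1 hb1B).mp h2).1
      have hNB' : ∀ b ∈ B, G.Adj v ↑b → b ∈ B' := by
        intro b hbB hbN
        have h2 : (deleteVert (localComp G v) v).Adj a1 b := by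
          rw [hH]
          exact ⟨hneAB a1 ha1A b hbB, Or.inr ⟨⟨ha1N, hbN⟩, hindep ha1N hbN⟩⟩
        exact ((hadj a1 ha1A b hbB).mp h2).2
      by_cases hA'N : ∀ a ∈ A', G.Adj v ↑a
      · -- v joins the B side
        refine hprime ⟨_, _, aux_split_symm (aux_build_split G v B A
          (by rw [Set.union_comm]; exact hcov) hdisj.symm h2B h2A
          ((Subtype.val '' B' \ {y | G.Adj v y}) ∪ {v}) (Subtype.val '' A')
          (Set.union_subset_union (Set.diff_subset.trans (Set.image_mono hB'sub))
            subset_rfl)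
          (Set.image_mono hA'sub) ?_)⟩
        rintro x (⟨b, hbB, rfl⟩ | rfl) y ⟨a, haA, rfl⟩
        · rw [G.adj_comm, key a haA b hbB, Set.mem_union, Set.mem_diff, himg, himg,
            Set.mem_singleton_iff, Set.mem_setOf_eq]
          have f1 := hA'N a
          have f2 := hNA' a haA
          have f3 := hNB' b hbB
          have f4 : (b : V) ≠ v := b.2
          unfold Xor' Xor
          tauto
        · rw [himg]
          constructor
          · intro h
            exact ⟨Or.inr rfl, hNA' a haA h⟩
          · rintro ⟨-, h⟩
            exact hA'N a h
      by_cases hB'N : ∀ b ∈ B', G.Adj v ↑b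
      · -- v joins the A side
        refine hprime ⟨_, _, aux_build_split G v A B hcov hdisj h2A h2B
          ((Subtype.val '' A' \ {y | G.Adj v y}) ∪ {v}) (Subtype.val '' B')
          (Set.union_subset_union (Set.diff_subset.trans (Set.image_mono hA'sub))
            subset_rfl)
          (Set.image_mono hB'sub) ?_⟩
        rintro x (⟨a, haA, rfl⟩ | rfl) y ⟨b, hbB, rfl⟩
        · rw [key a haA b hbB, Set.mem_union, Set.mem_diff, himg, himg,
            Set.mem_singleton_iff, Set.mem_setOf_eq]
          have f1 := hB'N b
          have f2 := hNB' b hbB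
          have f3 := hNA' a haA
          have f4 : (a : V) ≠ v := a.2
          unfold Xor' Xor
          tauto
        · rw [himg]
          constructor
          · intro h
            exact ⟨Or.inr rfl, hNB' b hbB h⟩
          · rintro ⟨-, h⟩
            exact hB'N b h
      · -- pentagon case
        push_neg at hA'N hB'N
        obtain ⟨a0, ha0A', ha0N⟩ := hA'N
        obtain ⟨b0, hb0B', hb0N⟩ := hB'N
        have ha1A' : a1 ∈ A' := hNA' a1 ha1A ha1N
        have hb1B' : b1 ∈ B' := hNB' b1 hb1B hb1N
        have e1 : G.Adj ↑a1 ↑b0 := by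
          rw [key a1 ha1A b0 (hB'sub hb0B')]
          exact Or.inl ⟨⟨ha1A', hb0B'⟩, fun h => hb0N h.2⟩
        have e2 : G.Adj ↑a0 ↑b0 := by
          rw [key a0 (hA'sub ha0A') b0 (hB'sub hb0B')]
          exact Or.inl ⟨⟨ha0A', hb0B'⟩, fun h => ha0N h.1⟩
        have e3 : G.Adj ↑a0 ↑b1 := by
          rw [key a0 (hA'sub ha0A') b1 hb1B]
          exact Or.inl ⟨⟨ha0A', hb1B'⟩, fun h => ha0N h.1⟩
        exact aux_no_pentagon hbip ha1N e1 e2.symm e3 hb1N.symm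
    · push_neg at hNA
      refine hprime ⟨_, _, aux_split_symm (aux_build_split G v B A
        (by rw [Set.union_comm]; exact hcov) hdisj.symm h2B h2A
        (Subtype.val '' B') (Subtype.val '' A')
        ((Set.image_mono hB'sub).trans Set.subset_union_left)
        (Set.image_mono hA'sub) ?_)⟩
      rintro x (⟨b, hbB, rfl⟩ | rfl) y ⟨a, haA, rfl⟩
      · rw [G.adj_comm, key a haA b hbB, himg, himg]
        have f1 := hNA a haA
        unfold Xor' Xor
        tauto
      · constructor
        · intro h
          exact absurd h (hNA a haA)
        · rintro ⟨h, -⟩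
          exact absurd h (hvne B')
  · push_neg at hNB
    refine hprime ⟨_, _, aux_build_split G v A B hcov hdisj h2A h2B
      (Subtype.val '' A') (Subtype.val '' B')
      ((Set.image_mono hA'sub).trans Set.subset_union_left)
      (Set.image_mono hB'sub) ?_⟩
    rintro x (⟨a, haA, rfl⟩ | rfl) y ⟨b, hbB, rfl⟩
    · rw [key a haA b hbB, himg, himg]
      have f1 := hNB b hbB
      unfold Xor' Xor
      tauto
    · constructor
      · intro h
        exact absurd h (hNB b hbB)
      · rintro ⟨h, -⟩
        exact absurd h (hvne A')
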